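/- For a finite Frobenius ring R, the map y ↦ Ay from R^n to R^m has kernel equal to C^⊥, where C is the left row space of A ∈ R^{m×n}; consequently |C^⊥|·|D| = |R|^n where D is the right column space of A. -/
import Mathlib


/-- A finite ring is Frobenius iff `|C|·|C^⊥| = |R|^n` for every left submodule
`C ≤ R^n`. -/
def IsFrobenius (R : Type) [Ring R] [Fintype R] : Prop :=
  ∀ (n : ℕ) (C : Submodule R (Fin n → R)),
    Nat.card C *
      Nat.card {y : Fin n → R // ∀ c ∈ C, ∑ i, c i * y i = 0} =
    Fintype.card R ^ n

/-- For a finite Frobenius ring `R` and a matrix `A ∈ R^{m×n}`, the map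
`y ↦ Ay` has kernel equal to `C^⊥`, where `C` is the left row space of `A`;
consequently `|C^⊥|·|D| = |R|^n`, where `D` is the right column space. -/
theorem kernel_mulVec_eq_perp_and_card
    (R : Type) [Ring R] [Fintype R] (hR : IsFrobenius R)
    (m n : ℕ) (A : Matrix (Fin m) (Fin n) R) :
    {y : Fin n → R | (fun i => ∑ j, A i j * y j) = 0} =
      {y : Fin n → R |
        ∀ c ∈ {c : Fin n → R | ∃ x : Fin m → R, c = fun j => ∑ i, x i * A i j},
          ∑ j, c j * y j = 0} ∧
    Nat.card {y : Fin n → R |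
        ∀ c ∈ {c : Fin n → R | ∃ x : Fin m → R, c = fun j => ∑ i, x i * A i j},
          ∑ j, c j * y j = 0} *
      Nat.card {d : Fin m → R | ∃ y : Fin n → R, d = fun i => ∑ j, A i j * y j} =
    Fintype.card R ^ n := by
  set f : (Fin n → R) →+ (Fin m → R) :=
    { toFun := fun y i => ∑ j, A i j * y j
      map_zero' := by funext i; simp
      map_add' := by
        intro y z; funext i
        simp [mul_add, Finset.sum_add_distrib] } with hf
  have hset : {y : Fin n → R | (fun i => ∑ j, A i j * y j) = 0} =
      {y : Fin n → R |
        ∀ c ∈ {c : Fin n → R | ∃ x : Fin m → R, c = fun j => ∑ i, x i * A i j},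
          ∑ j, c j * y j = 0} := by
    ext y
    simp only [Set.mem_setOf_eq]
    constructor
    · rintro hy c ⟨x, rfl⟩
      have : ∑ j, (∑ i, x i * A i j) * y j
          = ∑ i, x i * ∑ j, A i j * y j := by
        simp_rw [Finset.sum_mul, Finset.mul_sum, mul_assoc]
        exact Finset.sum_comm
      rw [this]
      refine Finset.sum_eq_zero fun i _ => ?_
      have h0 : ∑ j, A i j * y j = 0 := congrFun hy i
      rw [h0, mul_zero]
    · intro h
      funext i
      have := h (fun j => ∑ i', (Pi.single i 1 : Fin m → R) i' * A i' j)
        ⟨Pi.single i 1, rfl⟩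
      simpa [Pi.single_apply, Finset.sum_ite_eq] using this
  refine ⟨hset, ?_⟩
  have hker : {y : Fin n → R |
        ∀ c ∈ {c : Fin n → R | ∃ x : Fin m → R, c = fun j => ∑ i, x i * A i j},
          ∑ j, c j * y j = 0} = (f.ker : Set (Fin n → R)) := by
    rw [← hset]
    ext y
    simp only [Set.mem_setOf_eq, SetLike.mem_coe, AddMonoidHom.mem_ker]
    rfl
  have hrange : {d : Fin m → R | ∃ y : Fin n → R, d = fun i => ∑ j, A i j * y j}
      = (f.range : Set (Fin m → R)) := by
    ext d
    simp only [Set.mem_setOf_eq, SetLike.mem_coe, AddMonoidHom.mem_range]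
    constructor
    · rintro ⟨y, rfl⟩; exact ⟨y, rfl⟩
    · rintro ⟨y, rfl⟩; exact ⟨y, rfl⟩
  rw [hker, hrange]
  have h1 : Nat.card (Fin n → R) =
      Nat.card ((Fin n → R) ⧸ f.ker) * Nat.card f.ker :=
    AddSubgroup.card_eq_card_quotient_mul_card_addSubgroup f.ker
  have h2 : Nat.card ((Fin n → R) ⧸ f.ker) = Nat.card f.range :=
    Nat.card_congr (QuotientAddGroup.quotientKerEquivRange f).toEquiv
  have h3 : Nat.card (Fin n → R) = Fintype.card R ^ n := by
    simp [Nat.card_eq_fintype_card]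
  rw [h2] at h1
  rw [show (Nat.card (f.ker : Set (Fin n → R)) *
      Nat.card (f.range : Set (Fin m → R)) : ℕ)
      = Nat.card f.range * Nat.card f.ker from Nat.mul_comm _ _]
  rw [← h1, h3]
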